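/- Let A be a unital Banach algebra and let (G, 𝔄) be a Gelfand theory for A. Then 𝔄 is unital and G is a unital homomorphism, i.e., G maps the identity of A to the identity of 𝔄. -/

import Mathlib

open scoped Pointwise

/-- A `ℂ`-submodule `L` of a (possibly non-unital) algebra `A` is a left ideal if it is
closed under left multiplication by arbitrary elements of `A`. -/
def IsLeftIdeal {A : Type*} [NonUnitalNonAssocRing A] [Module ℂ A]
    (L : Submodule ℂ A) : Prop :=
  ∀ a : A, ∀ x ∈ L, a * x ∈ L

/-- A left ideal `L` is modular if there is a right modular identity `u`,
i.e. `a * u - a ∈ L` for all `a`. -/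
def IsModularLeft {A : Type*} [NonUnitalNonAssocRing A] [Module ℂ A]
    (L : Submodule ℂ A) : Prop :=
  ∃ u : A, ∀ a : A, a * u - a ∈ L

/-- `L` is a maximal modular left ideal: a proper modular left ideal which is maximal among
proper left ideals. -/
def IsMaximalModularLeftIdeal {A : Type*} [NonUnitalNonAssocRing A] [Module ℂ A]
    (L : Submodule ℂ A) : Prop :=
  IsLeftIdeal L ∧ IsModularLeft L ∧ L ≠ ⊤ ∧
    ∀ M : Submodule ℂ A, IsLeftIdeal M → M ≠ ⊤ → L ≤ M → M = L

/-- `(G, 𝔄)` is a Gelfand theory for `A`: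
(G1) `𝔄` is a C*-algebra and `G : A → 𝔄` is an algebra homomorphism;
(G2) `L ↦ G⁻¹(L)` is a bijection between the maximal modular left ideals of `𝔄` and of `A`;
(G3) for each maximal modular left ideal `L` of `𝔄`, the induced map `A/G⁻¹(L) → 𝔄/L` has
dense range; equivalently (via the open quotient map `𝔄 → 𝔄/L`), the set `G(A) + L` is
dense in `𝔄`. -/
def IsGelfandTheory {A 𝔄 : Type*}
    [NonUnitalNormedRing A] [NormedSpace ℂ A] [IsScalarTower ℂ A A] [SMulCommClass ℂ A A]
    [NonUnitalNormedRing 𝔄] [StarRing 𝔄] [CStarRing 𝔄] [NormedSpace ℂ 𝔄]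
    [IsScalarTower ℂ 𝔄 𝔄] [SMulCommClass ℂ 𝔄 𝔄] [StarModule ℂ 𝔄] [CompleteSpace 𝔄]
    (G : A →ₙₐ[ℂ] 𝔄) : Prop :=
  Set.BijOn (fun L : Submodule ℂ 𝔄 => L.comap (LinearMapClass.linearMap G))
      {L | IsMaximalModularLeftIdeal L} {L | IsMaximalModularLeftIdeal L} ∧
    ∀ L : Submodule ℂ 𝔄, IsMaximalModularLeftIdeal L →
      Dense (Set.range ⇑G + (L : Set 𝔄))

section Aux

variable {E : Type*} [NonUnitalCStarAlgebra E]

lemma eq_top_of_modular_mem {J : Submodule ℂ E} (hJ : IsLeftIdeal J) {u : E}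
    (hu : ∀ a : E, a * u - a ∈ J) (huJ : u ∈ J) : J = ⊤ := by
  rw [Submodule.eq_top_iff']
  intro x
  have hx : x * u - (x * u - x) = x := sub_sub_cancel _ _
  rw [← hx]
  exact Submodule.sub_mem J (hJ x u huJ) (hu x)

lemma mem_of_norm_lt_one {J : Submodule ℂ E} (hJ : IsLeftIdeal J) {u : E}
    (hu : ∀ a : E, a * u - a ∈ J) {l : E} (hl : l ∈ J) (h : ‖u - l‖ < 1) : u ∈ J := by
  set a : E := u - l with ha
  clear_value a
  have hnorm : ‖((a : Unitization ℂ E))‖ < 1 := by rwa [Unitization.norm_inr]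
  set v : (Unitization ℂ E)ˣ := Units.oneSub _ hnorm with hv
  set w : Unitization ℂ E := -(a : Unitization ℂ E) * ↑v⁻¹ with hwdef
  have hfst : w.fst = 0 := by
    simp [hwdef, Unitization.fst_mul]
  have hwinr : w = ((w.snd : E) : Unitization ℂ E) := by
    conv_lhs => rw [← Unitization.inl_fst_add_inr_snd_eq w]
    rw [hfst]
    simp
  set β : E := w.snd with hβ
  clear_value β
  have hkey : (β : Unitization ℂ E) + (a : Unitization ℂ E)
      - (β : Unitization ℂ E) * (a : Unitization ℂ E) = 0 := by
    have h1 : (β : Unitization ℂ E) * (1 - (a : Unitization ℂ E)) = -(a : Unitization ℂ E) := by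
      rw [← hwinr, hwdef, mul_assoc]
      have : (↑v⁻¹ : Unitization ℂ E) * (1 - (a : Unitization ℂ E)) = 1 := by
        have := v.inv_mul
        simpa [hv] using this
      rw [this, mul_one]
    have h2 : (β : Unitization ℂ E) - (β : Unitization ℂ E) * (a : Unitization ℂ E)
        = -(a : Unitization ℂ E) := by
      rw [← h1, mul_one_sub]
    calc (β : Unitization ℂ E) + (a : Unitization ℂ E) - (β : Unitization ℂ E) * (a : Unitization ℂ E)
        = ((β : Unitization ℂ E) - (β : Unitization ℂ E) * (a : Unitization ℂ E)) + (a : Unitization ℂ E) := by abel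
      _ = -(a : Unitization ℂ E) + (a : Unitization ℂ E) := by rw [h2]
      _ = 0 := by abel
  have hE : β + a - β * a = 0 := by
    apply Unitization.inr_injective (R := ℂ)
    push_cast
    simpa using hkey
  have haJ : a ∈ J := by
    have : a = (β * u - β) - β * l := by
      rw [sub_eq_iff_eq_add] at hE
      have : β * a = β + a := by rw [hE, zero_add]
      rw [ha] at this ⊢
      rw [mul_sub] at this
      have h3 : β * u - β * l = β + (u - l) := this
      have h4 : β * u - β = β * l + (u - l) := by
        rw [sub_eq_iff_eq_add]
        rw [sub_eq_iff_eq_add] at h3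
        rw [h3]; abel
      rw [h4]; abel
    rw [this]
    exact Submodule.sub_mem J (hu β) (hJ β l hl)
  have : u = a + l := by rw [ha]; abel
  rw [this]
  exact Submodule.add_mem J haJ hl

lemma isClosed_of_max_modular {L : Submodule ℂ E} (hL : IsMaximalModularLeftIdeal L) :
    IsClosed (L : Set E) := by
  obtain ⟨hleft, ⟨u, hu⟩, hne, hmax⟩ := hL
  set L' := L.topologicalClosure with hL'
  have hcoe : (L' : Set E) = closure (L : Set E) := rfl
  have hleft' : IsLeftIdeal L' := by
    intro a x hx
    have hx' : x ∈ closure (L : Set E) := hx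
    show a * x ∈ (L' : Set E)
    rw [hcoe]
    exact map_mem_closure (continuous_mul_left a) hx' (fun y hy => hleft a y hy)
  have hne' : L' ≠ ⊤ := by
    intro htop
    apply hne
    have huL' : u ∈ closure (L : Set E) := by
      rw [← hcoe, htop]; trivial
    rw [Metric.mem_closure_iff] at huL'
    obtain ⟨l, hl, hdist⟩ := huL' 1 one_pos
    have : u ∈ L := mem_of_norm_lt_one hleft hu hl (by rwa [← dist_eq_norm])
    exact eq_top_of_modular_mem hleft hu this
  have heq := hmax L' hleft' hne' L.le_topologicalClosure
  have hcl : IsClosed (L' : Set E) := hcoe ▸ isClosed_closure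
  rwa [heq] at hcl

end Aux

section Aux2

variable {E : Type*} [NonUnitalCStarAlgebra E]

lemma not_norm_lt_one_of_one_mem_spectrum {k : E} (hk : IsSelfAdjoint k)
    (h1 : (1 : ℂ) ∈ spectrum ℂ ((k : Unitization ℂ E))) (x : E) :
    ¬ ‖x * k - x - k‖ < 1 := by
  intro hlt
  have hnorm : ‖-(((x * k - x - k : E)) : Unitization ℂ E)‖ < 1 := by
    rw [norm_neg, Unitization.norm_inr]; exact hlt
  obtain ⟨v, hv⟩ : ∃ v : (Unitization ℂ E)ˣ,
      (v : Unitization ℂ E) = ((x : Unitization ℂ E) - 1) * ((k : Unitization ℂ E) - 1) := by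
    refine ⟨Units.oneSub _ hnorm, ?_⟩
    show 1 - -(((x * k - x - k : E)) : Unitization ℂ E) = _
    rw [sub_neg_eq_add, Unitization.inr_sub, Unitization.inr_sub, Unitization.inr_mul,
      mul_sub, sub_mul, mul_one, one_mul]
    abel
  obtain ⟨w, hwK⟩ : ∃ w : Unitization ℂ E, w * ((k : Unitization ℂ E) - 1) = 1 :=
    ⟨↑v⁻¹ * ((x : Unitization ℂ E) - 1), by rw [mul_assoc, ← hv, v.inv_mul]⟩
  have hKsa : star ((k : Unitization ℂ E) - 1) = (k : Unitization ℂ E) - 1 := by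
    have hone : star (1 : Unitization ℂ E) = 1 := Unitization.ext (by simp) (by simp)
    simp [star_sub, ← Unitization.inr_star, hk.star_eq, hone]
  have hKw : ((k : Unitization ℂ E) - 1) * star w = 1 := by
    have h2 := star_mul w ((k : Unitization ℂ E) - 1)
    rw [hwK, star_one, hKsa] at h2
    exact h2.symm
  have hws : w = star w := by
    calc w = w * (((k : Unitization ℂ E) - 1) * star w) := by rw [hKw, mul_one]
    _ = (w * ((k : Unitization ℂ E) - 1)) * star w := (mul_assoc _ _ _).symm
    _ = star w := by rw [hwK, one_mul]
  have hunit : IsUnit ((k : Unitization ℂ E) - 1) :=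
    ⟨⟨_, w, by rw [hws]; exact hKw, hwK⟩, rfl⟩
  rw [spectrum.mem_iff] at h1
  apply h1
  rw [map_one]
  have heq : (1 : Unitization ℂ E) - (k : Unitization ℂ E)
      = -((k : Unitization ℂ E) - 1) := by noncomm_ring
  rw [heq]
  exact hunit.neg

set_option maxHeartbeats 1000000 in
lemma eq_zero_of_mem_all_max_modular {z : E}
    (hz : ∀ L : Submodule ℂ E, IsMaximalModularLeftIdeal L → z ∈ L) : z = 0 := by
  by_contra hz0
  set h : E := star z * z with hdef
  have hsa : IsSelfAdjoint h := IsSelfAdjoint.star_mul_self z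
  have hh0 : h ≠ 0 := by
    intro h0
    apply hz0
    have hns := CStarRing.norm_star_mul_self (x := z)
    rw [← hdef, h0, norm_zero] at hns
    have := mul_self_eq_zero.mp hns.symm
    exact norm_eq_zero.mp this
  have hsaU : IsSelfAdjoint ((h : Unitization ℂ E)) := Unitization.isSelfAdjoint_inr.mpr hsa
  have hrad : spectralRadius ℂ ((h : Unitization ℂ E)) = ‖(h : Unitization ℂ E)‖₊ :=
    hsaU.spectralRadius_eq_nnnorm
  obtain ⟨lam, hlm, hlne⟩ : ∃ lam ∈ spectrum ℂ ((h : Unitization ℂ E)), lam ≠ 0 := by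
    by_contra hc
    push_neg at hc
    have hz' : spectralRadius ℂ ((h : Unitization ℂ E)) = 0 := by
      rw [spectralRadius]
      refine le_antisymm (iSup₂_le fun μ hμ => by simp [hc μ hμ]) zero_le
    rw [hz'] at hrad
    apply hh0
    have h0' : (‖(h : Unitization ℂ E)‖₊ : ENNReal) = 0 := hrad.symm
    rw [ENNReal.coe_eq_zero, Unitization.nnnorm_inr] at h0'
    simpa using h0'
  have hre : lam = lam.re := hsaU.mem_spectrum_eq_re hlm
  have hconj : (starRingEnd ℂ) lam = lam := by
    rw [Complex.conj_eq_iff_im]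
    rw [hre]
    simp
  set k : E := lam⁻¹ • h with hkdef
  have hksa : IsSelfAdjoint k := by
    rw [IsSelfAdjoint, hkdef, star_smul, hsa.star_eq]
    congr 1
    rw [RCLike.star_def, map_inv₀, hconj]
  have h1mem : (1 : ℂ) ∈ spectrum ℂ ((k : Unitization ℂ E)) := by
    rw [spectrum.mem_iff, map_one]
    intro hunit
    apply spectrum.mem_iff.mp hlm
    have key : (algebraMap ℂ (Unitization ℂ E)) lam - (h : Unitization ℂ E)
        = (algebraMap ℂ (Unitization ℂ E)) lam * (1 - (k : Unitization ℂ E)) := by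
      rw [mul_sub, mul_one]
      congr 1
      rw [← Algebra.smul_def, hkdef, Unitization.inr_smul, smul_smul,
        mul_inv_cancel₀ hlne, one_smul]
    rw [key]
    exact ((isUnit_iff_ne_zero.mpr hlne).map (algebraMap ℂ (Unitization ℂ E))).mul hunit
  have hdist := not_norm_lt_one_of_one_mem_spectrum hksa h1mem
  set M₀ : Submodule ℂ E :=
    { carrier := {y | ∃ x : E, x * k - x = y}
      add_mem' := by
        rintro y₁ y₂ ⟨x₁, rfl⟩ ⟨x₂, rfl⟩
        exact ⟨x₁ + x₂, by rw [add_mul]; abel⟩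
      zero_mem' := ⟨0, by simp⟩
      smul_mem' := by
        rintro c y ⟨x, rfl⟩
        exact ⟨c • x, by rw [smul_mul_assoc, smul_sub]⟩ } with hM₀
  have hM₀mem : ∀ y : E, y ∈ M₀ ↔ ∃ x : E, x * k - x = y := fun y => Iff.rfl
  have hkM₀ : k ∉ M₀ := by
    rintro ⟨x, hx⟩
    exact hdist x (by rw [hx]; simpa using zero_lt_one)
  have hM₀S : IsLeftIdeal M₀ := by
    rintro a y ⟨x, rfl⟩
    exact ⟨a * x, by rw [mul_sub, mul_assoc]⟩
  set S : Set (Submodule ℂ E) := {J | IsLeftIdeal J ∧ M₀ ≤ J ∧ k ∉ J} with hS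
  have hzorn : ∀ c ⊆ S, IsChain (· ≤ ·) c → ∀ y ∈ c, ∃ ub ∈ S, ∀ z ∈ c, z ≤ ub := by
    intro c hcS hchain y hy
    have hne : c.Nonempty := ⟨y, hy⟩
    have hdir : DirectedOn (· ≤ ·) c := hchain.directedOn
    refine ⟨sSup c, ⟨?_, ?_, ?_⟩, fun z hz => le_sSup hz⟩
    · intro a x hx
      obtain ⟨J, hJ, hxJ⟩ := (Submodule.mem_sSup_of_directed hne hdir).mp hx
      exact (Submodule.mem_sSup_of_directed hne hdir).mpr ⟨J, hJ, (hcS hJ).1 a x hxJ⟩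
    · exact (hcS hy).2.1.trans (le_sSup hy)
    · intro hk
      obtain ⟨J, hJ, hkJ⟩ := (Submodule.mem_sSup_of_directed hne hdir).mp hk
      exact (hcS hJ).2.2 hkJ
  obtain ⟨L, hM₀L, hLmax⟩ := zorn_le_nonempty₀ S hzorn M₀ ⟨hM₀S, le_rfl, hkM₀⟩
  obtain ⟨⟨hLleft, hM₀L', hkL⟩, hmaxL⟩ := hLmax
  have hLmml : IsMaximalModularLeftIdeal L := by
    refine ⟨hLleft, ⟨k, fun a => hM₀L' ⟨a, rfl⟩⟩, ?_, ?_⟩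
    · intro htop
      exact hkL (htop ▸ Submodule.mem_top)
    · intro M hMleft hMne hLM
      have hkM : k ∉ M := by
        intro hkM
        apply hMne
        rw [Submodule.eq_top_iff']
        intro x
        have hx : x * k - (x * k - x) = x := sub_sub_cancel _ _
        rw [← hx]
        exact Submodule.sub_mem M (hMleft x k hkM) (hLM (hM₀L' ⟨x, rfl⟩))
      exact le_antisymm (hmaxL ⟨hMleft, hM₀L'.trans hLM, hkM⟩ hLM) hLM
  apply hkL
  have hzL : z ∈ L := hz L hLmml
  have hhL : h ∈ L := hLleft (star z) z hzL
  exact Submodule.smul_mem L _ hhL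

end Aux2

section Aux3

variable {E : Type*} [NonUnitalCStarAlgebra E]

lemma G1_mul_sub_mem {B : Type*} [NonUnitalNormedRing B] [NormedSpace ℂ B]
    [IsScalarTower ℂ B B] [SMulCommClass ℂ B B]
    (G : B →ₙₐ[ℂ] E) (hG : IsGelfandTheory G) (e1 : B) (he1 : ∀ b : B, e1 * b = b)
    {L : Submodule ℂ E} (hL : IsMaximalModularLeftIdeal L) (x : E) :
    G e1 * x - x ∈ L := by
  have hclosed := isClosed_of_max_modular hL
  have hScl : IsClosed ((fun y => G e1 * y - y) ⁻¹' (L : Set E)) :=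
    IsClosed.preimage ((continuous_const.mul continuous_id).sub continuous_id) hclosed
  have hsub : Set.range ⇑G + (L : Set E) ⊆ (fun y => G e1 * y - y) ⁻¹' (L : Set E) := by
    rintro y hy
    obtain ⟨g, hg, l, hl, rfl⟩ := Set.mem_add.mp hy
    obtain ⟨a, rfl⟩ := hg
    show G e1 * (G a + l) - (G a + l) ∈ L
    have h1 : G e1 * G a = G a := by rw [← map_mul, he1]
    have h2 : G e1 * (G a + l) - (G a + l) = G e1 * l - l := by rw [mul_add, h1]; abel
    rw [h2]
    exact Submodule.sub_mem L (hL.1 (G e1) l hl) hl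
  have hd := (hG.2 L hL).closure_eq
  have hx : x ∈ closure (Set.range ⇑G + (L : Set E)) := by rw [hd]; trivial
  exact closure_minimal hsub hScl hx

end Aux3

/-- If `A` is a unital Banach algebra and `(G, 𝔄)` is a Gelfand theory for `A`, then `𝔄`
is unital and `G` maps the identity of `A` to the identity of `𝔄`. -/
theorem stmt_3 {A 𝔄 : Type*} [NormedRing A] [NormedAlgebra ℂ A] [CompleteSpace A]
    [NonUnitalNormedRing 𝔄] [StarRing 𝔄] [CStarRing 𝔄] [NormedSpace ℂ 𝔄]
    [IsScalarTower ℂ 𝔄 𝔄] [SMulCommClass ℂ 𝔄 𝔄] [StarModule ℂ 𝔄] [CompleteSpace 𝔄]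
    (G : A →ₙₐ[ℂ] 𝔄) (hG : IsGelfandTheory G) :
    ∃ e : 𝔄, (∀ x : 𝔄, e * x = x ∧ x * e = x) ∧ G 1 = e := by
  letI : NonUnitalCStarAlgebra 𝔄 :=
    { ‹NonUnitalNormedRing 𝔄›, ‹StarRing 𝔄›, ‹CStarRing 𝔄›, ‹CompleteSpace 𝔄›,
      ‹NormedSpace ℂ 𝔄›, ‹IsScalarTower ℂ 𝔄 𝔄›, ‹SMulCommClass ℂ 𝔄 𝔄›, ‹StarModule ℂ 𝔄› with }
  have hleft : ∀ x : 𝔄, G 1 * x = x := by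
    intro x
    have hmem : ∀ L : Submodule ℂ 𝔄, IsMaximalModularLeftIdeal L → G 1 * x - x ∈ L :=
      fun L hL => G1_mul_sub_mem G hG 1 one_mul hL x
    have h0 := eq_zero_of_mem_all_max_modular hmem
    rwa [sub_eq_zero] at h0
  have hright : ∀ y : 𝔄, y * star (G 1) = y := by
    intro y
    have h1 := hleft (star y)
    calc y * star (G 1) = star (G 1 * star y) := by rw [star_mul, star_star]
    _ = y := by rw [h1, star_star]
  have hee : G 1 = star (G 1) := by
    conv_lhs => rw [← hright (G 1)]
    exact hleft (star (G 1))
  refine ⟨G 1, fun x => ⟨hleft x, ?_⟩, rfl⟩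
  rw [hee]
  exact hright x
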